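/- For every bicomplex number s, the product of s with all seven of its nontrivial conjugates and pseudoconjugates equals the real number |a|⁴|b|⁴, where a, b are the idempotent components of s; consequently s is invertible if and only if this product is nonzero. -/

import Mathlib

noncomputable section

/-- The bicomplex numbers, modeled via their idempotent representation as `ℂ × ℂ`
(componentwise addition and multiplication). -/
abbrev BC : Type := ℂ × ℂ

namespace BC

/-- The imaginary unit `i₁`. -/
def i1 : BC := (Complex.I, Complex.I)

/-- The imaginary unit `i₂`. -/
def i2 : BC := (-Complex.I, Complex.I)

/-- The hyperbolic unit `j₁ = i₁ i₂`. -/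
def j1 : BC := (1, -1)

/-- The idempotent `e₁ = (1 + j₁)/2`. -/
def e1 : BC := (1, 0)

/-- The idempotent `e₂ = (1 - j₁)/2`. -/
def e2 : BC := (0, 1)

/-- The embedding of `ℂ(i₁)` into the bicomplex numbers. -/
def C (z : ℂ) : BC := (z, z)

end BC

open BC

/-- The product of `s = a e₁ + b e₂` with its seven nontrivial conjugates and
pseudoconjugates equals the real number `|a|⁴|b|⁴`; hence `s` is invertible iff this
product is nonzero. -/
theorem stmt_19 (a b : ℂ) :
    (C a * e1 + C b * e2)
      * (C b * e1 + C a * e2)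
      * (C (starRingEnd ℂ b) * e1 + C (starRingEnd ℂ a) * e2)
      * (C (starRingEnd ℂ a) * e1 + C (starRingEnd ℂ b) * e2)
      * (C (starRingEnd ℂ a) * e1 + C b * e2)
      * (C a * e1 + C (starRingEnd ℂ b) * e2)
      * (C (starRingEnd ℂ b) * e1 + C a * e2)
      * (C b * e1 + C (starRingEnd ℂ a) * e2)
      = algebraMap ℝ BC (‖a‖ ^ 4 * ‖b‖ ^ 4) ∧
    (IsUnit (C a * e1 + C b * e2) ↔
      (C a * e1 + C b * e2)
        * (C b * e1 + C a * e2)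
        * (C (starRingEnd ℂ b) * e1 + C (starRingEnd ℂ a) * e2)
        * (C (starRingEnd ℂ a) * e1 + C (starRingEnd ℂ b) * e2)
        * (C (starRingEnd ℂ a) * e1 + C b * e2)
        * (C a * e1 + C (starRingEnd ℂ b) * e2)
        * (C (starRingEnd ℂ b) * e1 + C a * e2)
        * (C b * e1 + C (starRingEnd ℂ a) * e2) ≠ 0) := by
  have key : ∀ x : ℂ, x * (starRingEnd ℂ x) * ((starRingEnd ℂ x) * x) = ((‖x‖ : ℂ))^4 := by
    intro x
    rw [Complex.mul_conj, mul_comm ((starRingEnd ℂ) x) x, Complex.mul_conj,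
      Complex.normSq_eq_norm_sq]
    push_cast
    ring
  have hmain : (C a * e1 + C b * e2)
      * (C b * e1 + C a * e2)
      * (C (starRingEnd ℂ b) * e1 + C (starRingEnd ℂ a) * e2)
      * (C (starRingEnd ℂ a) * e1 + C (starRingEnd ℂ b) * e2)
      * (C (starRingEnd ℂ a) * e1 + C b * e2)
      * (C a * e1 + C (starRingEnd ℂ b) * e2)
      * (C (starRingEnd ℂ b) * e1 + C a * e2)
      * (C b * e1 + C (starRingEnd ℂ a) * e2)
      = algebraMap ℝ BC (‖a‖ ^ 4 * ‖b‖ ^ 4) := by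
    have ha := key a
    have hb := key b
    apply Prod.ext <;>
      simp [C, e1, e2, Prod.mul_def, Prod.add_def] <;>
      push_cast <;>
      rw [show ((‖a‖ : ℂ))^4 * ((‖b‖ : ℂ))^4 = (a * (starRingEnd ℂ a) * ((starRingEnd ℂ a) * a)) * (b * (starRingEnd ℂ b) * ((starRingEnd ℂ b) * b)) by rw [ha, hb]] <;>
      ring
  refine ⟨hmain, ?_⟩
  rw [hmain]
  have hunit : IsUnit (C a * e1 + C b * e2) ↔ a ≠ 0 ∧ b ≠ 0 := by
    constructor
    · rintro ⟨u, hu⟩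
      have h1 : (C a * e1 + C b * e2) * ↑u⁻¹ = 1 := by rw [← hu, Units.mul_inv]
      have h1' := congrArg Prod.fst h1
      have h2' := congrArg Prod.snd h1
      simp [C, e1, e2, Prod.mul_def] at h1' h2'
      exact ⟨left_ne_zero_of_mul_eq_one h1', left_ne_zero_of_mul_eq_one h2'⟩
    · rintro ⟨ha, hb⟩
      refine isUnit_iff_exists_inv.2 ⟨(a⁻¹, b⁻¹), ?_⟩
      have : (C a * e1 + C b * e2) = (a, b) := by simp [C, e1, e2, Prod.mul_def, Prod.add_def]
      rw [this]
      ext <;> simp [Prod.mul_def, mul_inv_cancel₀, ha, hb]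
  rw [hunit]
  have : (algebraMap ℝ BC) (‖a‖ ^ 4 * ‖b‖ ^ 4) ≠ 0 ↔
      (‖a‖ ^ 4 * ‖b‖ ^ 4 : ℝ) ≠ 0 := by
    constructor
    · intro h h0; apply h; rw [h0]; simp
    · intro h h0
      apply h
      have := congrArg Prod.fst h0
      simpa [Complex.ext_iff] using this
  rw [this]
  simp [mul_ne_zero_iff, pow_ne_zero_iff, norm_eq_zero]
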